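/- arXiv:0710.0050 — 2 statements merged into one kernel-verified Lean document; each statement's English description precedes it below -/
import Mathlib

section
/- The Λ-linear maps f_r : S_r → Λ defined on the bar basis by f_{2s}([h_1|...|h_{2s}]) = e if [h_1|...|h_{2s}] is strongly alternating and 0 otherwise, and f_{2s+1}([g^i|h_2|...|h_{2s+1}]) = σ_i · f_{2s}([h_2|...|h_{2s+1}]) for 0 ≤ i < k, form a chain map from the standard resolution to the minimal resolution: f_{2s}(∂c) = τ·f_{2s+1}(c) for c ∈ S_{2s+1}, and f_{2s+1}(∂c) = σ·f_{2s+2}(c) for c ∈ S_{2s+2}. -/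
open scoped Classical

/-- The group ring `Λ = R[ℤ_k]`. -/
abbrev GroupRing (R : Type*) [CommRing R] (k : ℕ) :=
  MonoidAlgebra R (Multiplicative (ZMod k))

/-- The generator `g` of `ℤ_k` inside the group ring. -/
noncomputable def gen (R : Type*) [CommRing R] (k : ℕ) : GroupRing R k :=
  MonoidAlgebra.of R (Multiplicative (ZMod k)) (Multiplicative.ofAdd (1 : ZMod k))

/-- `σ_i = e + g + ⋯ + g^{i-1}`. -/
noncomputable def sigmaEl (R : Type*) [CommRing R] (k i : ℕ) : GroupRing R k :=
  ∑ j ∈ Finset.range i, gen R k ^ j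

/-- `S_r = Λ^{⊗(r+1)}` of the standard resolution, realized as the free `R`-module
on the set `(ℤ_k)^{r+1}` of elementary tensors `h_0 ⊗ ⋯ ⊗ h_r`. -/
abbrev StdRes (R : Type*) [CommRing R] (k r : ℕ) : Type _ :=
  (Fin (r + 1) → Multiplicative (ZMod k)) →₀ R

/-- The boundary `∂ : S_{n+1} → S_n`,
`h_0 ⊗ ⋯ ⊗ h_{n+1} ↦ Σ_i (-1)^i h_0 ⊗ ⋯ ⊗ ĥ_i ⊗ ⋯ ⊗ h_{n+1}`. -/
noncomputable def stdBoundary (R : Type*) [CommRing R] (k n : ℕ) :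
    StdRes R k (n + 1) →ₗ[R] StdRes R k n :=
  ∑ i : Fin (n + 2), ((-1 : R) ^ (i : ℕ)) •
    Finsupp.lmapDomain R R (fun f => f ∘ i.succAbove)

/-- The exponent `a ∈ {0,…,k-1}` with `x = g^a`. -/
def toExp {k : ℕ} (x : Multiplicative (ZMod k)) : ℕ := (Multiplicative.toAdd x).val

/-- The bar coordinates of an elementary tensor `x = h_0 ⊗ ⋯ ⊗ h_r`, i.e. the
sequence `(h_1,…,h_r)` with `x = h_0 · [h_1|⋯|h_r]`:
`qseq x i = x_i⁻¹ · x_{i+1}`. -/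
def qseq {k r : ℕ} (x : Fin (r + 1) → Multiplicative (ZMod k)) :
    Fin r → Multiplicative (ZMod k) :=
  fun i => (x i.castSucc)⁻¹ * x i.succ

/-- `[g^{a_1}|⋯|g^{a_{2s}}]` (with `0 ≤ a_i < k`) is strongly alternating iff
`a_{2i+1} + a_{2i+2} ≥ k` for all `0 ≤ i ≤ s-1`.  Here `b j = g^{a_{j+1}}`. -/
def StronglyAltEven (k s : ℕ) (b : Fin (2 * s) → Multiplicative (ZMod k)) : Prop :=
  ∀ i : ℕ, ∀ h : 2 * i + 1 < 2 * s,
    k ≤ toExp (b ⟨2 * i, by omega⟩) + toExp (b ⟨2 * i + 1, h⟩)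

/-- `f_{2s} : S_{2s} → Λ`: the `Λ`-linear map sending a bar element to `e` if it is
strongly alternating and to `0` otherwise.  On the `R`-basis of elementary
tensors `x = h_0·[h_1|⋯|h_{2s}]`, this is `h_0` resp. `0` by `Λ`-linearity. -/
noncomputable def fEven (R : Type*) [CommRing R] (k s : ℕ) :
    StdRes R k (2 * s) →ₗ[R] GroupRing R k :=
  Finsupp.linearCombination R fun x =>
    if StronglyAltEven k s (qseq x) then MonoidAlgebra.single (x 0) (1 : R) else 0

/-- `f_{2s+1} : S_{2s+1} → Λ`: `Λ`-linear with
`f_{2s+1}([g^i|h_2|⋯|h_{2s+1}]) = σ_i · f_{2s}([h_2|⋯|h_{2s+1}])`. -/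
noncomputable def fOdd (R : Type*) [CommRing R] (k s : ℕ) :
    StdRes R k (2 * s + 1) →ₗ[R] GroupRing R k :=
  Finsupp.linearCombination R fun x =>
    if StronglyAltEven k s (fun i => qseq x i.succ) then
      MonoidAlgebra.single (x 0) (1 : R) * sigmaEl R k (toExp (qseq x 0))
    else 0


noncomputable def ind (A : Type*) [Ring A] (P : Prop) : A := if P then 1 else 0

lemma ind_pos {A : Type*} [Ring A] {P : Prop} (h : P) : ind A P = 1 := if_pos h
lemma ind_neg {A : Type*} [Ring A] {P : Prop} (h : ¬P) : ind A P = 0 := if_neg h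
lemma ind_congr {A : Type*} [Ring A] {P Q : Prop} (h : P ↔ Q) : ind A P = ind A Q := by
  by_cases hP : P
  · rw [ind_pos hP, ind_pos (h.mp hP)]
  · rw [ind_neg hP, ind_neg (fun hq => hP (h.mpr hq))]
lemma ite_eq_ind_mul {A : Type*} [Ring A] (P : Prop) [Decidable P] (z : A) :
    (if P then z else 0) = ind A P * z := by
  by_cases h : P <;> simp [ind, h]
lemma ind_and {A : Type*} [Ring A] (P Q : Prop) : ind A (P ∧ Q) = ind A P * ind A Q := by
  by_cases hP : P <;> by_cases hQ : Q <;> simp [ind, hP, hQ]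

def Ecd (k : ℕ) (b : ℕ → ℕ) (t : ℕ) : Prop := ∀ j, j < t → k ≤ b (2*j) + b (2*j+1)
def Ocd (k s : ℕ) (b : ℕ → ℕ) (t : ℕ) : Prop := ∀ j, t ≤ j → j < s → k ≤ b (2*j+1) + b (2*j+2)
def CoddP (k s : ℕ) (b : ℕ → ℕ) (u : ℕ) : Prop :=
  Ecd k b u ∧ k ≤ (b (2*u) + b (2*u+1)) % k + b (2*u+2) ∧ Ocd k s b (u+1)
def CevenP (k s : ℕ) (b : ℕ → ℕ) (u : ℕ) : Prop :=
  Ecd k b u ∧ k ≤ b (2*u) + (b (2*u+1) + b (2*u+2)) % k ∧ Ocd k s b (u+1)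

lemma step {A : Type*} [Ring A] (k s : ℕ) (b : ℕ → ℕ) (hb : ∀ j, b j < k) (u : ℕ) (hu : u < s) :
    ind A (CevenP k s b u) - ind A (CoddP k s b u)
      = ind A (Ecd k b (u+1) ∧ Ocd k s b (u+1)) - ind A (Ecd k b u ∧ Ocd k s b u) := by
  by_cases hE : Ecd k b u
  · by_cases hO : Ocd k s b (u+1)
    · have hEs : ∀ P : Prop, (Ecd k b u ∧ P ∧ Ocd k s b (u+1)) ↔ P :=
        fun P => ⟨fun h => h.2.1, fun h => ⟨hE, h, hO⟩⟩
      have h1 : ind A (CevenP k s b u) = ind A (k ≤ b (2*u) + (b (2*u+1) + b (2*u+2)) % k) :=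
        ind_congr (hEs _)
      have h2 : ind A (CoddP k s b u) = ind A (k ≤ (b (2*u) + b (2*u+1)) % k + b (2*u+2)) :=
        ind_congr (hEs _)
      have h3 : ind A (Ecd k b (u+1) ∧ Ocd k s b (u+1)) = ind A (k ≤ b (2*u) + b (2*u+1)) := by
        apply ind_congr; constructor
        · exact fun h => h.1 u (by omega)
        · intro h
          refine ⟨fun j hj => ?_, hO⟩
          rcases Nat.lt_succ_iff_lt_or_eq.mp hj with h'|h'
          · exact hE j h'
          · rw [h']; exact h
      have h4 : ind A (Ecd k b u ∧ Ocd k s b u) = ind A (k ≤ b (2*u+1) + b (2*u+2)) := by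
        apply ind_congr; constructor
        · exact fun h => h.2 u le_rfl hu
        · intro h
          refine ⟨hE, fun j hj1 hj2 => ?_⟩
          rcases Nat.eq_or_lt_of_le hj1 with h'|h'
          · rw [← h']; exact h
          · exact hO j h' hj2
      rw [h1, h2, h3, h4]
      have ha := hb (2*u); have hbb := hb (2*u+1); have hc := hb (2*u+2)
      set p := b (2*u); set q := b (2*u+1); set r := b (2*u+2)
      rcases le_or_gt k (p+q) with h5|h5 <;> rcases le_or_gt k (q+r) with h6|h6
      · have e1 : (p+q) % k = p+q-k := by rw [Nat.mod_eq_sub_mod h5, Nat.mod_eq_of_lt (by omega)]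
        have e2 : (q+r) % k = q+r-k := by rw [Nat.mod_eq_sub_mod h6, Nat.mod_eq_of_lt (by omega)]
        rw [e1, e2, ind_pos h5, ind_pos h6,
          ind_congr (show (k ≤ p + (q+r-k)) ↔ (k ≤ (p+q-k) + r) by omega)]
        simp
      · have e1 : (p+q) % k = p+q-k := by rw [Nat.mod_eq_sub_mod h5, Nat.mod_eq_of_lt (by omega)]
        have e2 : (q+r) % k = q+r := Nat.mod_eq_of_lt h6
        rw [e1, e2, ind_pos h5, ind_neg (show ¬ k ≤ q+r by omega),
          ind_pos (show k ≤ p+(q+r) by omega), ind_neg (show ¬ k ≤ (p+q-k)+r by omega)]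
      · have e1 : (p+q) % k = p+q := Nat.mod_eq_of_lt h5
        have e2 : (q+r) % k = q+r-k := by rw [Nat.mod_eq_sub_mod h6, Nat.mod_eq_of_lt (by omega)]
        rw [e1, e2, ind_neg (show ¬ k ≤ p+q by omega), ind_pos h6,
          ind_neg (show ¬ k ≤ p+(q+r-k) by omega), ind_pos (show k ≤ (p+q)+r by omega)]
      · have e1 : (p+q) % k = p+q := Nat.mod_eq_of_lt h5
        have e2 : (q+r) % k = q+r := Nat.mod_eq_of_lt h6
        rw [e1, e2, ind_neg (show ¬ k ≤ p+q by omega), ind_neg (show ¬ k ≤ q+r by omega),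
          ind_congr (show (k ≤ p + (q+r)) ↔ (k ≤ (p+q) + r) by omega)]
        simp
    · have hO' : ¬ Ocd k s b u := fun h => hO (fun j hj1 hj2 => h j (by omega) hj2)
      rw [ind_neg (fun h => hO h.2.2), ind_neg (fun h => hO h.2.2),
        ind_neg (fun h => hO h.2), ind_neg (fun h => hO' h.2)]
  · have hE' : ¬ Ecd k b (u+1) := fun h => hE (fun j hj => h j (by omega))
    rw [ind_neg (fun h => hE h.1), ind_neg (fun h => hE h.1),
      ind_neg (fun h => hE' h.1), ind_neg (fun h => hE h.1)]

lemma core {A : Type*} [Ring A] (k s : ℕ) (b : ℕ → ℕ) (hb : ∀ j, b j < k) :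
    ∑ u ∈ Finset.range s, (ind A (CevenP k s b u) - ind A (CoddP k s b u))
      = ind A (Ecd k b s) - ind A (Ocd k s b 0) := by
  rw [Finset.sum_congr rfl (fun u hu => step k s b hb u (Finset.mem_range.mp hu)),
    Finset.sum_range_sub (fun t => ind A (Ecd k b t ∧ Ocd k s b t))]
  congr 1
  · exact ind_congr ⟨fun h => h.1, fun h => ⟨h, fun j hj1 hj2 => absurd hj2 (by omega)⟩⟩
  · exact ind_congr ⟨fun h => h.2, fun h => ⟨fun j hj => absurd hj (by omega), h⟩⟩

lemma sum_range_two_mul {A : Type*} [AddCommMonoid A] (s : ℕ) (f : ℕ → A) :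
    ∑ t ∈ Finset.range (2*s), f t = ∑ u ∈ Finset.range s, (f (2*u) + f (2*u+1)) := by
  induction s with
  | zero => simp
  | succ n ih =>
    rw [show 2*(n+1) = 2*n+1+1 by ring, Finset.sum_range_succ, Finset.sum_range_succ, ih,
      Finset.sum_range_succ]
    rw [add_assoc]

lemma merge_even_iff (k s u : ℕ) (hu : u < s) (b F : ℕ → ℕ)
    (hF : ∀ m, m < 2*s → F m = if m < 2*u then b m
        else if m = 2*u then (b (2*u) + b (2*u+1)) % k else b (m+1)) :
    (∀ i, i < s → k ≤ F (2*i) + F (2*i+1)) ↔ CoddP k s b u := by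
  have e1 : ∀ m, m < 2*u → F m = b m := fun m hm => by
    rw [hF m (by omega), if_pos hm]
  have e2 : F (2*u) = (b (2*u) + b (2*u+1)) % k := by
    rw [hF _ (by omega), if_neg (by omega), if_pos rfl]
  have e3 : ∀ m, 2*u < m → m < 2*s → F m = b (m+1) := fun m h1 h2 => by
    rw [hF m h2, if_neg (by omega), if_neg (by omega)]
  constructor
  · intro H
    refine ⟨fun j hj => ?_, ?_, fun j hj1 hj2 => ?_⟩
    · have := H j (by omega); rwa [e1 _ (by omega), e1 _ (by omega)] at this
    · have := H u hu; rwa [e2, e3 _ (by omega) (by omega)] at this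
    · have := H j hj2; rwa [e3 _ (by omega) (by omega), e3 _ (by omega) (by omega)] at this
  · rintro ⟨hE, hM, hO⟩ i hi
    rcases lt_trichotomy i u with h|h|h
    · rw [e1 _ (by omega), e1 _ (by omega)]; exact hE i h
    · subst h; rw [e2, e3 _ (by omega) (by omega)]; exact hM
    · rw [e3 _ (by omega) (by omega), e3 _ (by omega) (by omega)]; exact hO i (by omega) hi

lemma merge_odd_iff (k s u : ℕ) (hu : u < s) (b F : ℕ → ℕ)
    (hF : ∀ m, m < 2*s → F m = if m < 2*u+1 then b m
        else if m = 2*u+1 then (b (2*u+1) + b (2*u+2)) % k else b (m+1)) :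
    (∀ i, i < s → k ≤ F (2*i) + F (2*i+1)) ↔ CevenP k s b u := by
  have e1 : ∀ m, m < 2*u+1 → F m = b m := fun m hm => by
    rw [hF m (by omega), if_pos hm]
  have e2 : F (2*u+1) = (b (2*u+1) + b (2*u+2)) % k := by
    rw [hF _ (by omega), if_neg (by omega), if_pos rfl]
  have e3 : ∀ m, 2*u+1 < m → m < 2*s → F m = b (m+1) := fun m h1 h2 => by
    rw [hF m h2, if_neg (by omega), if_neg (by omega)]
  constructor
  · intro H
    refine ⟨fun j hj => ?_, ?_, fun j hj1 hj2 => ?_⟩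
    · have := H j (by omega); rwa [e1 _ (by omega), e1 _ (by omega)] at this
    · have := H u hu; rwa [e1 _ (by omega), e2] at this
    · have := H j hj2; rwa [e3 _ (by omega) (by omega), e3 _ (by omega) (by omega)] at this
  · rintro ⟨hE, hM, hO⟩ i hi
    rcases lt_trichotomy i u with h|h|h
    · rw [e1 _ (by omega), e1 _ (by omega)]; exact hE i h
    · subst h; rw [e1 _ (by omega), e2]; exact hM
    · rw [e3 _ (by omega) (by omega), e3 _ (by omega) (by omega)]; exact hO i (by omega) hi

lemma plain_E_iff (k s : ℕ) (b F : ℕ → ℕ) (hF : ∀ m, m < 2*s → F m = b m) :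
    (∀ i, i < s → k ≤ F (2*i) + F (2*i+1)) ↔ Ecd k b s := by
  constructor
  · intro H j hj; have := H j hj; rwa [hF _ (by omega), hF _ (by omega)] at this
  · intro H i hi; rw [hF _ (by omega), hF _ (by omega)]; exact H i hi

lemma plain_O_iff (k s : ℕ) (b F : ℕ → ℕ) (hF : ∀ m, m < 2*s → F m = b (m+1)) :
    (∀ i, i < s → k ≤ F (2*i) + F (2*i+1)) ↔ Ocd k s b 0 := by
  constructor
  · intro H j _ hj; have := H j hj; rwa [hF _ (by omega), hF _ (by omega)] at this
  · intro H i hi; rw [hF _ (by omega), hF _ (by omega)]; exact H i (by omega) hi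

lemma shift_iff (k s : ℕ) (aa ab : ℕ → ℕ) (hab : ∀ j, ab j = aa (j+1)) :
    (∀ i, i < s+1 → k ≤ aa (2*i) + aa (2*i+1)) ↔ (k ≤ aa 0 + aa 1 ∧ Ocd k s ab 0) := by
  constructor
  · intro H
    refine ⟨by simpa using H 0 (by omega), fun j _ hj => ?_⟩
    have := H (j+1) (by omega)
    rw [hab, hab, show 2*j+2+1 = 2*(j+1)+1 by ring, show 2*j+1+1 = 2*(j+1) by ring]
    exact this
  · rintro ⟨h0, hO⟩ i hi
    rcases Nat.eq_zero_or_pos i with h|h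
    · subst h; simpa using h0
    · obtain ⟨j, rfl⟩ := Nat.exists_eq_add_of_le h
      have := hO j (by omega) (by omega)
      rw [hab, hab] at this
      rw [show 2*(1+j)+1 = 2*j+2+1 by ring, show 2*(1+j) = 2*j+1+1 by ring]
      exact this

section GR
variable (R : Type*) [CommRing R] (k : ℕ)

lemma gen_pow_eq (j : ℕ) :
    gen R k ^ j = MonoidAlgebra.single (Multiplicative.ofAdd ((j : ZMod k))) 1 := by
  rw [gen, ← map_pow, ← ofAdd_nsmul, nsmul_eq_mul, mul_one, MonoidAlgebra.of_apply]

lemma single_eq_gen_pow [NeZero k] (u : Multiplicative (ZMod k)) :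
    MonoidAlgebra.single u (1:R) = gen R k ^ toExp u := by
  rw [gen_pow_eq]
  congr 1
  have : ((toExp u : ℕ) : ZMod k) = Multiplicative.toAdd u := ZMod.natCast_rightInverse _
  rw [this]
  exact (ofAdd_toAdd u).symm

lemma toExp_lt {k : ℕ} [NeZero k] (x : Multiplicative (ZMod k)) : toExp x < k := ZMod.val_lt _

lemma toExp_mul {k : ℕ} [NeZero k] (u v : Multiplicative (ZMod k)) :
    toExp (u * v) = (toExp u + toExp v) % k := ZMod.val_add _ _

lemma gen_pow_k : gen R k ^ k = 1 := by
  rw [gen_pow_eq, ZMod.natCast_self]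
  rfl

lemma sigma_succ (i : ℕ) : sigmaEl R k (i+1) = sigmaEl R k i + gen R k ^ i :=
  Finset.sum_range_succ _ _

lemma tau_mul_sigma (i : ℕ) : (gen R k - 1) * sigmaEl R k i = gen R k ^ i - 1 := by
  induction i with
  | zero => simp [sigmaEl]
  | succ n ih => rw [sigma_succ, mul_add, ih, pow_succ]; ring

lemma sigma_add (a b : ℕ) : sigmaEl R k (a+b) = sigmaEl R k a + gen R k ^ a * sigmaEl R k b := by
  unfold sigmaEl
  rw [Finset.sum_range_add, Finset.mul_sum]
  congr 1
  exact Finset.sum_congr rfl fun i _ => pow_add _ _ _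

lemma gen_mul_sigma_k (hk : 0 < k) : gen R k * sigmaEl R k k = sigmaEl R k k := by
  have h := Finset.sum_range_succ' (fun j => gen R k ^ j) k
  rw [Finset.sum_range_succ, gen_pow_k, pow_zero] at h
  have h4 := add_right_cancel h
  have h2 : gen R k * sigmaEl R k k = ∑ i ∈ Finset.range k, gen R k ^ (i+1) := by
    rw [sigmaEl, Finset.mul_sum]
    exact Finset.sum_congr rfl fun i _ => by rw [pow_succ, mul_comm]
  rw [h2, ← h4, sigmaEl]

lemma gen_pow_mul_sigma_k (hk : 0 < k) (a : ℕ) :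
    gen R k ^ a * sigmaEl R k k = sigmaEl R k k := by
  induction a with
  | zero => simp
  | succ n ih => rw [pow_succ, mul_assoc, gen_mul_sigma_k R k hk, ih]

lemma single_mul_sigma_k [NeZero k] (u : Multiplicative (ZMod k)) :
    MonoidAlgebra.single u (1:R) * sigmaEl R k k = sigmaEl R k k := by
  rw [single_eq_gen_pow, gen_pow_mul_sigma_k R k (Nat.pos_of_ne_zero (NeZero.ne k))]

lemma sigma_mod [NeZero k] (m : ℕ) (hm : m < 2*k) :
    sigmaEl R k m = sigmaEl R k (m % k) + (ind (GroupRing R k) (k ≤ m)) * sigmaEl R k k := by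
  rcases lt_or_ge m k with h|h
  · rw [Nat.mod_eq_of_lt h, ind_neg (by omega)]
    ring
  · have e : m % k = m - k := by rw [Nat.mod_eq_sub_mod h, Nat.mod_eq_of_lt (by omega)]
    calc sigmaEl R k m = sigmaEl R k (k + (m-k)) := by rw [Nat.add_sub_cancel' h]
      _ = sigmaEl R k k + gen R k ^ k * sigmaEl R k (m-k) := sigma_add R k k (m-k)
      _ = sigmaEl R k (m % k) + (ind (GroupRing R k) (k ≤ m)) * sigmaEl R k k := by
          rw [gen_pow_k, one_mul, e, ind_pos h]; ring

end GR

section FinStuff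
variable {k : ℕ}

lemma qseq_comp_lt {n : ℕ} (x : Fin (n+2) → Multiplicative (ZMod k)) (i : Fin (n+2)) (j : Fin n)
    (h : (j:ℕ)+1 < (i:ℕ)) :
    qseq (x ∘ i.succAbove) j = qseq x ⟨(j:ℕ), by omega⟩ := by
  unfold qseq
  simp only [Function.comp_apply]
  rw [Fin.succAbove_of_castSucc_lt _ _ (by rw [Fin.lt_def]; simp; omega),
      Fin.succAbove_of_castSucc_lt _ _ (by rw [Fin.lt_def]; simp; omega)]
  congr 1

lemma qseq_comp_eq {n : ℕ} (x : Fin (n+2) → Multiplicative (ZMod k)) (i : Fin (n+2)) (j : Fin n)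
    (h : (j:ℕ)+1 = (i:ℕ)) :
    qseq (x ∘ i.succAbove) j
      = qseq x ⟨(j:ℕ), by omega⟩ * qseq x ⟨(j:ℕ)+1, by omega⟩ := by
  unfold qseq
  simp only [Function.comp_apply]
  rw [Fin.succAbove_of_castSucc_lt _ _ (by rw [Fin.lt_def]; simp; omega),
      Fin.succAbove_of_le_castSucc _ _ (by rw [Fin.le_def]; simp; omega)]
  have e1 : x (⟨(j:ℕ), by omega⟩ : Fin (n+1)).castSucc = x j.castSucc.castSucc :=
    congrArg x (Fin.ext (by simp))
  have e2 : x (⟨(j:ℕ), by omega⟩ : Fin (n+1)).succ = x (⟨(j:ℕ)+1, by omega⟩ : Fin (n+1)).castSucc :=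
    congrArg x (Fin.ext (by simp))
  have e3 : x (⟨(j:ℕ)+1, by omega⟩ : Fin (n+1)).succ = x j.succ.succ :=
    congrArg x (Fin.ext (by simp))
  rw [e1, e2, e3, mul_assoc, mul_inv_cancel_left]

lemma qseq_comp_ge {n : ℕ} (x : Fin (n+2) → Multiplicative (ZMod k)) (i : Fin (n+2)) (j : Fin n)
    (h : (i:ℕ) ≤ (j:ℕ)) :
    qseq (x ∘ i.succAbove) j = qseq x ⟨(j:ℕ)+1, by omega⟩ := by
  unfold qseq
  simp only [Function.comp_apply]
  rw [Fin.succAbove_of_le_castSucc _ _ (by rw [Fin.le_def]; simp; omega),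
      Fin.succAbove_of_le_castSucc _ _ (by rw [Fin.le_def]; simp; omega)]
  congr 1

lemma comp_zero_pos {n : ℕ} (x : Fin (n+2) → Multiplicative (ZMod k)) (i : Fin (n+2))
    (hi : 0 < (i:ℕ)) : (x ∘ i.succAbove) 0 = x 0 := by
  have : i.succAbove 0 = 0 := by
    rw [Fin.succAbove_of_castSucc_lt _ _ (by rw [Fin.lt_def]; simpa using hi)]
    rfl
  simp [this]

lemma comp_zero_zero {n : ℕ} (x : Fin (n+2) → Multiplicative (ZMod k)) :
    (x ∘ (0 : Fin (n+2)).succAbove) 0 = x 1 := by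
  simp [Fin.zero_succAbove]

lemma SA_iff (s : ℕ) (c : Fin (2*s) → Multiplicative (ZMod k)) (F : ℕ → ℕ)
    (hc : ∀ (m : ℕ) (hm : m < 2*s), toExp (c ⟨m, hm⟩) = F m) :
    StronglyAltEven k s c ↔ ∀ i, i < s → k ≤ F (2*i) + F (2*i+1) := by
  unfold StronglyAltEven
  constructor
  · intro H i hi
    have := H i (by omega)
    rwa [hc _ (by omega), hc _ (by omega)] at this
  · intro H i hi
    rw [hc _ (by omega), hc _ (by omega)]
    exact H i (by omega)

end FinStuff

section FS
variable (R : Type*) [CommRing R] (k : ℕ)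

lemma fEven_single (s : ℕ) (x : Fin (2*s+1) → Multiplicative (ZMod k)) :
    fEven R k s (Finsupp.single x 1) =
      ind (GroupRing R k) (StronglyAltEven k s (qseq x)) * MonoidAlgebra.single (x 0) 1 := by
  rw [fEven, Finsupp.linearCombination_single, one_smul, ite_eq_ind_mul]

lemma fOdd_single (s : ℕ) (x : Fin (2*s+1+1) → Multiplicative (ZMod k)) :
    fOdd R k s (Finsupp.single x 1) =
      ind (GroupRing R k) (StronglyAltEven k s (fun i => qseq x i.succ)) *
        (MonoidAlgebra.single (x 0) 1 * sigmaEl R k (toExp (qseq x 0))) := by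
  rw [fOdd, Finsupp.linearCombination_single, one_smul, ite_eq_ind_mul]

lemma stdBoundary_single (n : ℕ) (x : Fin (n+2) → Multiplicative (ZMod k)) :
    stdBoundary R k n (Finsupp.single x (1:R)) =
      ∑ i : Fin (n+2), ((-1:R)^(i:ℕ)) • Finsupp.single (x ∘ i.succAbove) 1 := by
  rw [stdBoundary, LinearMap.sum_apply]
  refine Finset.sum_congr rfl fun i _ => ?_
  rw [LinearMap.smul_apply, Finsupp.lmapDomain_apply, Finsupp.mapDomain_single]

lemma neg_one_pow_smul (t : ℕ) (z : GroupRing R k) :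
    ((-1:R)^t) • z = ((-1 : GroupRing R k)^t) * z := by
  rw [Algebra.smul_def, map_pow, map_neg, map_one]

end FS


lemma part1 (k : ℕ) (hk : 2 ≤ k) (R : Type*) [CommRing R] (s : ℕ)
    (x : Fin (2*s+1+1) → Multiplicative (ZMod k)) :
    fEven R k s (stdBoundary R k (2*s) (Finsupp.single x 1))
      = (gen R k - 1) * fOdd R k s (Finsupp.single x 1) := by
  haveI : NeZero k := ⟨by omega⟩
  obtain ⟨aa, haa, haalt⟩ : ∃ aa : ℕ → ℕ,
      (∀ (j : ℕ) (h : j < 2*s+1), toExp (qseq x ⟨j, h⟩) = aa j) ∧ (∀ j, aa j < k) := by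
    refine ⟨fun j => if h : j < 2*s+1 then toExp (qseq x ⟨j,h⟩) else 0,
      fun j h => by
        show toExp (qseq x ⟨j, h⟩) = if h' : j < 2*s+1 then toExp (qseq x ⟨j,h'⟩) else 0
        rw [dif_pos h],
      fun j => ?_⟩
    dsimp only
    split
    · exact toExp_lt _
    · omega
  rw [stdBoundary_single, map_sum]
  simp only [map_smul, fEven_single, neg_one_pow_smul]
  rw [Fin.sum_univ_castSucc, Fin.sum_univ_succ, fOdd_single]
  -- first face
  have hterm0 : (-1 : GroupRing R k) ^ ((Fin.castSucc (0 : Fin (2*s+1))):ℕ) *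
      (ind (GroupRing R k) (StronglyAltEven k s (qseq (x ∘ (Fin.castSucc (0 : Fin (2*s+1))).succAbove))) *
        MonoidAlgebra.single ((x ∘ (Fin.castSucc (0 : Fin (2*s+1))).succAbove) 0) 1)
      = ind (GroupRing R k) (Ocd k s aa 0) * MonoidAlgebra.single (x 1) 1 := by
    rw [Fin.castSucc_zero, comp_zero_zero]
    have hS : StronglyAltEven k s (qseq (x ∘ (0 : Fin (2*s+1+1)).succAbove)) ↔ Ocd k s aa 0 :=
      (SA_iff s _ (fun m => aa (m+1)) (fun m hm => by
        rw [qseq_comp_ge x _ ⟨m, hm⟩ (by simp)]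
        exact haa _ (by omega))).trans (plain_O_iff k s aa _ (fun m hm => rfl))
    rw [ind_congr hS]
    simp
  -- last face
  have htermlast : (-1 : GroupRing R k) ^ ((Fin.last (2*s+1)):ℕ) *
      (ind (GroupRing R k) (StronglyAltEven k s (qseq (x ∘ (Fin.last (2*s+1)).succAbove))) *
        MonoidAlgebra.single ((x ∘ (Fin.last (2*s+1)).succAbove) 0) 1)
      = - (ind (GroupRing R k) (Ecd k aa s) * MonoidAlgebra.single (x 0) 1) := by
    rw [comp_zero_pos x _ (by simp [Fin.val_last])]
    have hS : StronglyAltEven k s (qseq (x ∘ (Fin.last (2*s+1)).succAbove)) ↔ Ecd k aa s :=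
      (SA_iff s _ aa (fun m hm => by
        rw [qseq_comp_lt x _ ⟨m, hm⟩ (by simp [Fin.val_last]; omega)]
        exact haa _ (by omega))).trans (plain_E_iff k s aa aa (fun m hm => rfl))
    rw [ind_congr hS, Fin.val_last, pow_succ, pow_mul, neg_one_sq, one_pow, one_mul]
    ring
  -- middle faces
  have hmid : ∀ i : Fin (2*s),
      (-1 : GroupRing R k) ^ ((i.succ.castSucc):ℕ) *
        (ind (GroupRing R k) (StronglyAltEven k s (qseq (x ∘ (i.succ.castSucc).succAbove))) *
          MonoidAlgebra.single ((x ∘ (i.succ.castSucc).succAbove) 0) 1)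
      = (fun t => (-1 : GroupRing R k)^(t+1) *
          (ind (GroupRing R k) (if t % 2 = 0 then CoddP k s aa (t/2) else CevenP k s aa (t/2)) *
            MonoidAlgebra.single (x 0) 1)) ((i:ℕ)) := by
    intro i
    have ht : (i:ℕ) < 2*s := i.isLt
    have hiv : ((i.succ.castSucc):ℕ) = (i:ℕ)+1 := by simp
    have hc : ∀ (m : ℕ) (hm : m < 2*s),
        toExp (qseq (x ∘ (i.succ.castSucc).succAbove) ⟨m, hm⟩)
          = (fun m => if m < (i:ℕ) then aa m
              else if m = (i:ℕ) then (aa (i:ℕ) + aa ((i:ℕ)+1)) % k else aa (m+1)) m := by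
      intro m hm
      dsimp only
      rcases lt_trichotomy m (i:ℕ) with h|h|h
      · rw [if_pos h, qseq_comp_lt x _ ⟨m, hm⟩ (by simp; omega)]
        exact haa _ (by omega)
      · rw [if_neg (by omega), if_pos h, qseq_comp_eq x _ ⟨m, hm⟩ (by simp; omega), toExp_mul,
          haa m (by omega), haa (m+1) (by omega), h]
      · rw [if_neg (by omega), if_neg (by omega), qseq_comp_ge x _ ⟨m, hm⟩ (by simp; omega)]
        exact haa _ (by omega)
    have hSA := SA_iff s (qseq (x ∘ (i.succ.castSucc).succAbove)) _ hc
    dsimp only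
    rw [hiv, comp_zero_pos x _ (by simp)]
    rcases Nat.even_or_odd (i:ℕ) with ⟨u, hu⟩|⟨u, hu⟩
    · have ht2 : (i:ℕ) = 2*u := by omega
      rw [show ((i:ℕ)) % 2 = 0 by omega, show ((i:ℕ)) / 2 = u by omega, if_pos rfl]
      rw [ind_congr (hSA.trans (merge_even_iff k s u (by omega) aa
        (fun m => if m < (i:ℕ) then aa m
          else if m = (i:ℕ) then (aa (i:ℕ) + aa ((i:ℕ)+1)) % k else aa (m+1))
        (fun m hm => by simp only [ht2])))]
    · have ht2 : (i:ℕ) = 2*u+1 := by omega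
      rw [show ((i:ℕ)) % 2 = 1 by omega, show ((i:ℕ)) / 2 = u by omega, if_neg (by omega)]
      rw [ind_congr (hSA.trans (merge_odd_iff k s u (by omega) aa
        (fun m => if m < (i:ℕ) then aa m
          else if m = (i:ℕ) then (aa (i:ℕ) + aa ((i:ℕ)+1)) % k else aa (m+1))
        (fun m hm => by simp only [ht2])))]
  rw [hterm0, htermlast, Finset.sum_congr rfl (fun i _ => hmid i)]
  rw [Fin.sum_univ_eq_sum_range (fun t => (-1 : GroupRing R k)^(t+1) *
          (ind (GroupRing R k) (if t % 2 = 0 then CoddP k s aa (t/2) else CevenP k s aa (t/2)) *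
            MonoidAlgebra.single (x 0) 1)) (2*s), sum_range_two_mul]
  have hpair : ∀ u ∈ Finset.range s,
      ((fun t => (-1 : GroupRing R k)^(t+1) *
          (ind (GroupRing R k) (if t % 2 = 0 then CoddP k s aa (t/2) else CevenP k s aa (t/2)) *
            MonoidAlgebra.single (x 0) 1)) (2*u)
        + (fun t => (-1 : GroupRing R k)^(t+1) *
          (ind (GroupRing R k) (if t % 2 = 0 then CoddP k s aa (t/2) else CevenP k s aa (t/2)) *
            MonoidAlgebra.single (x 0) 1)) (2*u+1))
      = (ind (GroupRing R k) (CevenP k s aa u) - ind (GroupRing R k) (CoddP k s aa u)) *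
          MonoidAlgebra.single (x 0) 1 := by
    intro u _
    dsimp only
    rw [show (2*u) % 2 = 0 by omega, show (2*u) / 2 = u by omega,
        show (2*u+1) % 2 = 1 by omega, show (2*u+1) / 2 = u by omega,
        if_pos rfl, if_neg (by omega)]
    have hp1 : (-1 : GroupRing R k)^(2*u+1) = -1 := by
      rw [pow_succ, pow_mul, neg_one_sq, one_pow, one_mul]
    have hp2 : (-1 : GroupRing R k)^(2*u+1+1) = 1 := by rw [pow_succ, hp1]; ring
    rw [hp1, hp2]
    ring
  rw [Finset.sum_congr rfl hpair, ← Finset.sum_mul, core k s aa haalt]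
  -- RHS
  have hfin0 : (0 : Fin (2*s+1)) = ⟨0, by omega⟩ := Fin.ext (by simp)
  have htq0 : toExp (qseq x 0) = aa 0 := by rw [hfin0]; exact haa 0 (by omega)
  have hA : StronglyAltEven k s (fun i => qseq x i.succ) ↔ Ocd k s aa 0 :=
    (SA_iff s _ (fun m => aa (m+1)) (fun m hm => by exact haa (m+1) (by omega))).trans
      (plain_O_iff k s aa _ (fun m hm => rfl))
  have hx01 : MonoidAlgebra.single (x 0) (1:R) * gen R k ^ (aa 0) = MonoidAlgebra.single (x 1) 1 := by
    rw [← haa 0 (by omega), ← single_eq_gen_pow, MonoidAlgebra.single_mul_single, mul_one]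
    congr 1
    show x 0 * ((x (⟨0, by omega⟩ : Fin (2*s+1)).castSucc)⁻¹ * x (⟨0, by omega⟩ : Fin (2*s+1)).succ) = x 1
    have e1 : ((⟨0, by omega⟩ : Fin (2*s+1)).castSucc) = (0 : Fin (2*s+1+1)) := Fin.ext (by simp)
    have e2 : ((⟨0, by omega⟩ : Fin (2*s+1)).succ) = (1 : Fin (2*s+1+1)) := Fin.ext (by simp)
    rw [e1, e2, mul_inv_cancel_left]
  rw [ind_congr hA, htq0]
  have hRHS : (gen R k - 1) * (ind (GroupRing R k) (Ocd k s aa 0) *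
        (MonoidAlgebra.single (x 0) 1 * sigmaEl R k (aa 0)))
      = ind (GroupRing R k) (Ocd k s aa 0) * MonoidAlgebra.single (x 1) 1
        - ind (GroupRing R k) (Ocd k s aa 0) * MonoidAlgebra.single (x 0) 1 := by
    have h1 := tau_mul_sigma R k (aa 0)
    calc (gen R k - 1) * (ind (GroupRing R k) (Ocd k s aa 0) *
          (MonoidAlgebra.single (x 0) 1 * sigmaEl R k (aa 0)))
        = ind (GroupRing R k) (Ocd k s aa 0) *
            (MonoidAlgebra.single (x 0) 1 * ((gen R k - 1) * sigmaEl R k (aa 0))) := by ring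
      _ = ind (GroupRing R k) (Ocd k s aa 0) *
            (MonoidAlgebra.single (x 0) 1 * (gen R k ^ (aa 0) - 1)) := by rw [h1]
      _ = ind (GroupRing R k) (Ocd k s aa 0) *
            (MonoidAlgebra.single (x 0) 1 * gen R k ^ (aa 0))
          - ind (GroupRing R k) (Ocd k s aa 0) * MonoidAlgebra.single (x 0) 1 := by ring
      _ = _ := by rw [hx01]
  rw [hRHS]
  ring


set_option maxHeartbeats 1000000 in
lemma part2 (k : ℕ) (hk : 2 ≤ k) (R : Type*) [CommRing R] (s : ℕ)
    (x : Fin (2*s+2+1) → Multiplicative (ZMod k)) :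
    fOdd R k s (stdBoundary R k (2*s+1) (Finsupp.single x 1))
      = sigmaEl R k k * fEven R k (s+1) (Finsupp.single x 1) := by
  haveI : NeZero k := ⟨by omega⟩
  obtain ⟨aa, haa, haalt⟩ : ∃ aa : ℕ → ℕ,
      (∀ (j : ℕ) (h : j < 2*s+2), toExp (qseq x ⟨j, h⟩) = aa j) ∧ (∀ j, aa j < k) := by
    refine ⟨fun j => if h : j < 2*s+2 then toExp (qseq x ⟨j,h⟩) else 0,
      fun j h => by
        show toExp (qseq x ⟨j, h⟩) = if h' : j < 2*s+2 then toExp (qseq x ⟨j,h'⟩) else 0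
        rw [dif_pos h],
      fun j => ?_⟩
    dsimp only
    split
    · exact toExp_lt _
    · omega
  rw [stdBoundary_single, map_sum]
  simp only [map_smul, fOdd_single, neg_one_pow_smul]
  rw [Fin.sum_univ_castSucc, Fin.sum_univ_succ, Fin.sum_univ_succ, fEven_single]
  -- face 0
  have hterm0 : (-1 : GroupRing R k) ^ ((Fin.castSucc (0 : Fin (2*s+2))):ℕ) *
      (ind (GroupRing R k) (StronglyAltEven k s fun i => qseq (x ∘ (Fin.castSucc (0 : Fin (2*s+2))).succAbove) i.succ) *
        (MonoidAlgebra.single ((x ∘ (Fin.castSucc (0 : Fin (2*s+2))).succAbove) 0) 1 *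
          sigmaEl R k (toExp (qseq (x ∘ (Fin.castSucc (0 : Fin (2*s+2))).succAbove) 0))))
      = ind (GroupRing R k) (Ocd k s (fun j => aa (j+1)) 0) *
          (MonoidAlgebra.single (x 1) 1 * sigmaEl R k (aa 1)) := by
    rw [Fin.castSucc_zero, comp_zero_zero]
    have hq0 : toExp (qseq (x ∘ (0 : Fin (2*s+2+1)).succAbove) 0) = aa 1 := by
      rw [qseq_comp_ge x (0 : Fin (2*s+2+1)) (0 : Fin (2*s+1)) (by simp)]
      exact haa 1 (by omega)
    have hS : (StronglyAltEven k s fun i => qseq (x ∘ (0 : Fin (2*s+2+1)).succAbove) i.succ)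
        ↔ Ocd k s (fun j => aa (j+1)) 0 :=
      (SA_iff s _ (fun m => aa (m+2)) (fun m hm => by
        try dsimp only
        rw [qseq_comp_ge x (0 : Fin (2*s+2+1)) (⟨m, hm⟩ : Fin (2*s)).succ (by simp)]
        exact haa (m+2) (by omega))).trans
        (plain_O_iff k s (fun j => aa (j+1)) _ (fun m hm => rfl))
    rw [hq0, ind_congr hS]
    simp
  -- face 1
  have hterm1 : (-1 : GroupRing R k) ^ (((Fin.succ (0 : Fin (2*s+1))).castSucc):ℕ) *
      (ind (GroupRing R k) (StronglyAltEven k s fun i => qseq (x ∘ ((Fin.succ (0 : Fin (2*s+1))).castSucc).succAbove) i.succ) *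
        (MonoidAlgebra.single ((x ∘ ((Fin.succ (0 : Fin (2*s+1))).castSucc).succAbove) 0) 1 *
          sigmaEl R k (toExp (qseq (x ∘ ((Fin.succ (0 : Fin (2*s+1))).castSucc).succAbove) 0))))
      = -(ind (GroupRing R k) (Ocd k s (fun j => aa (j+1)) 0) *
          (MonoidAlgebra.single (x 0) 1 * sigmaEl R k ((aa 0 + aa 1) % k))) := by
    have hiv : (((Fin.succ (0 : Fin (2*s+1))).castSucc):ℕ) = 1 := by simp
    rw [comp_zero_pos x _ (by simp)]
    have hq1 : toExp (qseq (x ∘ ((Fin.succ (0 : Fin (2*s+1))).castSucc).succAbove) 0)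
        = (aa 0 + aa 1) % k := by
      rw [qseq_comp_eq x ((Fin.succ (0 : Fin (2*s+1))).castSucc) (0 : Fin (2*s+1)) (by simp)]
      simp only [Fin.val_zero]
      rw [toExp_mul, haa 0 (by omega), haa 1 (by omega)]
    have hS : (StronglyAltEven k s fun i => qseq (x ∘ ((Fin.succ (0 : Fin (2*s+1))).castSucc).succAbove) i.succ)
        ↔ Ocd k s (fun j => aa (j+1)) 0 :=
      (SA_iff s _ (fun m => aa (m+2)) (fun m hm => by
        try dsimp only
        rw [qseq_comp_ge x ((Fin.succ (0 : Fin (2*s+1))).castSucc) (⟨m, hm⟩ : Fin (2*s)).succ (by simp)]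
        exact haa (m+2) (by omega))).trans
        (plain_O_iff k s (fun j => aa (j+1)) _ (fun m hm => rfl))
    rw [hq1, ind_congr hS, hiv, pow_one]
    ring
  -- middle faces
  have hmid : ∀ i : Fin (2*s),
      (-1 : GroupRing R k) ^ ((i.succ.succ.castSucc):ℕ) *
        (ind (GroupRing R k) (StronglyAltEven k s fun i' => qseq (x ∘ (i.succ.succ.castSucc).succAbove) i'.succ) *
          (MonoidAlgebra.single ((x ∘ (i.succ.succ.castSucc).succAbove) 0) 1 *
            sigmaEl R k (toExp (qseq (x ∘ (i.succ.succ.castSucc).succAbove) 0))))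
      = (fun t => (-1 : GroupRing R k)^(t+2) *
          (ind (GroupRing R k)
              (if t % 2 = 0 then CoddP k s (fun j => aa (j+1)) (t/2)
                else CevenP k s (fun j => aa (j+1)) (t/2)) *
            (MonoidAlgebra.single (x 0) 1 * sigmaEl R k (aa 0)))) ((i:ℕ)) := by
    intro i
    have ht : (i:ℕ) < 2*s := i.isLt
    have hiv : ((i.succ.succ.castSucc):ℕ) = (i:ℕ)+2 := by simp
    rw [comp_zero_pos x _ (by simp)]
    have hq : toExp (qseq (x ∘ (i.succ.succ.castSucc).succAbove) 0) = aa 0 := by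
      rw [qseq_comp_lt x (i.succ.succ.castSucc) (0 : Fin (2*s+1)) (by simp)]
      exact haa 0 (by omega)
    have hc : ∀ (m : ℕ) (hm : m < 2*s),
        toExp ((fun i' : Fin (2*s) => qseq (x ∘ (i.succ.succ.castSucc).succAbove) i'.succ) ⟨m, hm⟩)
          = (fun m => if m < (i:ℕ) then aa (m+1)
              else if m = (i:ℕ) then (aa ((i:ℕ)+1) + aa ((i:ℕ)+2)) % k else aa (m+2)) m := by
      intro m hm
      dsimp only
      rw [show (⟨m, hm⟩ : Fin (2*s)).succ = ⟨m+1, by omega⟩ from rfl]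
      rcases lt_trichotomy m (i:ℕ) with h|h|h
      · rw [if_pos h, qseq_comp_lt x (i.succ.succ.castSucc) ⟨m+1, by omega⟩ (by simp; omega)]
        exact haa (m+1) (by omega)
      · rw [if_neg (by omega), if_pos h,
          qseq_comp_eq x (i.succ.succ.castSucc) ⟨m+1, by omega⟩ (by simp; omega), toExp_mul,
          haa (m+1) (by omega), haa (m+2) (by omega), h]
      · rw [if_neg (by omega), if_neg (by omega),
          qseq_comp_ge x (i.succ.succ.castSucc) ⟨m+1, by omega⟩ (by simp; omega)]
        exact haa (m+2) (by omega)
    have hSA := SA_iff s (fun i' => qseq (x ∘ (i.succ.succ.castSucc).succAbove) i'.succ) _ hc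
    dsimp only
    rw [hiv, hq]
    rcases Nat.even_or_odd (i:ℕ) with ⟨u, hu⟩|⟨u, hu⟩
    · have ht2 : (i:ℕ) = 2*u := by omega
      rw [show ((i:ℕ)) % 2 = 0 by omega, show ((i:ℕ)) / 2 = u by omega, if_pos rfl]
      rw [ind_congr (hSA.trans (merge_even_iff k s u (by omega) (fun j => aa (j+1))
        (fun m => if m < (i:ℕ) then aa (m+1)
          else if m = (i:ℕ) then (aa ((i:ℕ)+1) + aa ((i:ℕ)+2)) % k else aa (m+2))
        (fun m hm => by simp only [ht2])))]
    · have ht2 : (i:ℕ) = 2*u+1 := by omega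
      rw [show ((i:ℕ)) % 2 = 1 by omega, show ((i:ℕ)) / 2 = u by omega, if_neg (by omega)]
      rw [ind_congr (hSA.trans (merge_odd_iff k s u (by omega) (fun j => aa (j+1))
        (fun m => if m < (i:ℕ) then aa (m+1)
          else if m = (i:ℕ) then (aa ((i:ℕ)+1) + aa ((i:ℕ)+2)) % k else aa (m+2))
        (fun m hm => by simp only [ht2])))]
  -- last face
  have htermlast : (-1 : GroupRing R k) ^ ((Fin.last (2*s+2)):ℕ) *
      (ind (GroupRing R k) (StronglyAltEven k s fun i => qseq (x ∘ (Fin.last (2*s+2)).succAbove) i.succ) *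
        (MonoidAlgebra.single ((x ∘ (Fin.last (2*s+2)).succAbove) 0) 1 *
          sigmaEl R k (toExp (qseq (x ∘ (Fin.last (2*s+2)).succAbove) 0))))
      = ind (GroupRing R k) (Ecd k (fun j => aa (j+1)) s) *
          (MonoidAlgebra.single (x 0) 1 * sigmaEl R k (aa 0)) := by
    rw [comp_zero_pos x _ (by simp [Fin.val_last])]
    have hq : toExp (qseq (x ∘ (Fin.last (2*s+2)).succAbove) 0) = aa 0 := by
      rw [qseq_comp_lt x (Fin.last (2*s+2)) (0 : Fin (2*s+1)) (by simp [Fin.val_last])]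
      exact haa 0 (by omega)
    have hS : (StronglyAltEven k s fun i => qseq (x ∘ (Fin.last (2*s+2)).succAbove) i.succ)
        ↔ Ecd k (fun j => aa (j+1)) s :=
      (SA_iff s _ (fun m => aa (m+1)) (fun m hm => by
        try dsimp only
        rw [qseq_comp_lt x (Fin.last (2*s+2)) (⟨m, hm⟩ : Fin (2*s)).succ (by simp [Fin.val_last]; omega)]
        exact haa (m+1) (by omega))).trans
        (plain_E_iff k s (fun j => aa (j+1)) _ (fun m hm => rfl))
    have hp : (-1 : GroupRing R k)^(2*s+2) = 1 := by
      rw [show 2*s+2 = 2*(s+1) by ring, pow_mul, neg_one_sq, one_pow]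
    rw [hq, ind_congr hS, Fin.val_last, hp, one_mul]
  rw [hterm0, hterm1, htermlast, Finset.sum_congr rfl (fun i _ => hmid i)]
  rw [Fin.sum_univ_eq_sum_range (fun t => (-1 : GroupRing R k)^(t+2) *
          (ind (GroupRing R k)
              (if t % 2 = 0 then CoddP k s (fun j => aa (j+1)) (t/2)
                else CevenP k s (fun j => aa (j+1)) (t/2)) *
            (MonoidAlgebra.single (x 0) 1 * sigmaEl R k (aa 0)))) (2*s), sum_range_two_mul]
  have hpair : ∀ u ∈ Finset.range s,
      ((fun t => (-1 : GroupRing R k)^(t+2) *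
          (ind (GroupRing R k)
              (if t % 2 = 0 then CoddP k s (fun j => aa (j+1)) (t/2)
                else CevenP k s (fun j => aa (j+1)) (t/2)) *
            (MonoidAlgebra.single (x 0) 1 * sigmaEl R k (aa 0)))) (2*u)
        + (fun t => (-1 : GroupRing R k)^(t+2) *
          (ind (GroupRing R k)
              (if t % 2 = 0 then CoddP k s (fun j => aa (j+1)) (t/2)
                else CevenP k s (fun j => aa (j+1)) (t/2)) *
            (MonoidAlgebra.single (x 0) 1 * sigmaEl R k (aa 0)))) (2*u+1))
      = -((ind (GroupRing R k) (CevenP k s (fun j => aa (j+1)) u)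
          - ind (GroupRing R k) (CoddP k s (fun j => aa (j+1)) u)) *
          (MonoidAlgebra.single (x 0) 1 * sigmaEl R k (aa 0))) := by
    intro u _
    dsimp only
    rw [show (2*u) % 2 = 0 by omega, show (2*u) / 2 = u by omega,
        show (2*u+1) % 2 = 1 by omega, show (2*u+1) / 2 = u by omega,
        if_pos rfl, if_neg (by omega)]
    have hp1 : (-1 : GroupRing R k)^(2*u+2) = 1 := by
      rw [show 2*u+2 = 2*(u+1) by ring, pow_mul, neg_one_sq, one_pow]
    have hp2 : (-1 : GroupRing R k)^(2*u+1+2) = -1 := by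
      rw [show 2*u+1+2 = 2*(u+1)+1 by ring, pow_succ, pow_mul, neg_one_sq, one_pow, one_mul]
    rw [hp1, hp2]
    ring
  rw [Finset.sum_congr rfl hpair, Finset.sum_neg_distrib, ← Finset.sum_mul,
    core k s (fun j => aa (j+1)) (fun j => haalt (j+1))]
  -- RHS
  have hSright : StronglyAltEven k (s+1) (qseq x)
      ↔ (k ≤ aa 0 + aa 1 ∧ Ocd k s (fun j => aa (j+1)) 0) :=
    (SA_iff (s+1) (qseq x) aa (fun m hm => haa m (by omega))).trans
      (shift_iff k s aa (fun j => aa (j+1)) (fun j => rfl))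
  rw [ind_congr hSright, ind_and]
  -- key algebra
  have hx01 : MonoidAlgebra.single (x 0) (1:R) * gen R k ^ (aa 0)
      = MonoidAlgebra.single (x 1) 1 := by
    rw [← haa 0 (by omega), ← single_eq_gen_pow, MonoidAlgebra.single_mul_single, mul_one]
    congr 1
    show x 0 * ((x (⟨0, by omega⟩ : Fin (2*s+2)).castSucc)⁻¹ * x (⟨0, by omega⟩ : Fin (2*s+2)).succ) = x 1
    have e1 : ((⟨0, by omega⟩ : Fin (2*s+2)).castSucc) = (0 : Fin (2*s+2+1)) := Fin.ext (by simp)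
    have e2 : ((⟨0, by omega⟩ : Fin (2*s+2)).succ) = (1 : Fin (2*s+2+1)) := Fin.ext (by simp)
    rw [e1, e2, mul_inv_cancel_left]
  have h1 := sigma_add R k (aa 0) (aa 1)
  have h2 := sigma_mod R k (aa 0 + aa 1) (by have := haalt 0; have := haalt 1; omega)
  have hkey : MonoidAlgebra.single (x 1) (1:R) * sigmaEl R k (aa 1)
      - MonoidAlgebra.single (x 0) 1 * sigmaEl R k ((aa 0 + aa 1) % k)
      + MonoidAlgebra.single (x 0) 1 * sigmaEl R k (aa 0)
      = ind (GroupRing R k) (k ≤ aa 0 + aa 1) *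
          (MonoidAlgebra.single (x 0) 1 * sigmaEl R k k) := by
    rw [← hx01]
    linear_combination (MonoidAlgebra.single (x 0) (1:R)) * h2
      - (MonoidAlgebra.single (x 0) (1:R)) * h1
  linear_combination (ind (GroupRing R k) (Ocd k s (fun j => aa (j+1)) 0)) * hkey

/-- the maps `f_r` form a chain map from the standard resolution to
the minimal resolution: `f_{2s}(∂c) = τ·f_{2s+1}(c)` for `c ∈ S_{2s+1}` and
`f_{2s+1}(∂c) = σ·f_{2s+2}(c)` for `c ∈ S_{2s+2}`. -/
theorem stmt9 (k : ℕ) (hk : 2 ≤ k) (R : Type*) [CommRing R] (s : ℕ) :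
    (∀ c : StdRes R k (2 * s + 1),
      fEven R k s (stdBoundary R k (2 * s) c) = (gen R k - 1) * fOdd R k s c) ∧
    (∀ c : StdRes R k (2 * s + 2),
      fOdd R k s (stdBoundary R k (2 * s + 1) c) =
        sigmaEl R k k * fEven R k (s + 1) c) := by
  constructor
  · intro c
    induction c using Finsupp.induction_linear with
    | zero => simp
    | add f g hf hg => simp only [map_add, mul_add, hf, hg]
    | single x r =>
      have hx : (Finsupp.single x r) = r • (Finsupp.single x 1 : StdRes R k (2*s+1)) := by
        rw [Finsupp.smul_single, smul_eq_mul, mul_one]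
      rw [hx, map_smul, map_smul, map_smul, part1 k hk R s x, mul_smul_comm]
  · intro c
    induction c using Finsupp.induction_linear with
    | zero => simp
    | add f g hf hg => simp only [map_add, mul_add, hf, hg]
    | single x r =>
      have hx : (Finsupp.single x r) = r • (Finsupp.single x 1 : StdRes R k (2*s+2)) := by
        rw [Finsupp.smul_single, smul_eq_mul, mul_one]
      rw [hx, map_smul, map_smul, map_smul, part2 k hk R s x, mul_smul_comm]
end

section
/- Generalized Z_k-Tucker lemma: Let C_• be a chain complex of free Λ-modules with Λ-linear boundaries, φ_• : C_• → M_• a Λ-linear chain map to the minimal resolution, and (x_i)_{0≤i≤r} a generalized r-sphere in C_• (i.e. ∂x_i = σx_{i-1} for even i and ∂x_i = τx_{i-1} for odd i, 0 < i ≤ r). Define α_i = u(σ·φ_i(x_i)), where u : Λ → R evaluates at e. Then α_i ≡ α_0 (mod k·R) for all 0 ≤ i ≤ r. -/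
/-- `σ = e + g + ⋯ + g^{k-1}`. -/
noncomputable def sigma (R : Type*) [CommRing R] (k : ℕ) : GroupRing R k :=
  ∑ j ∈ Finset.range k, gen R k ^ j

/-- The element of `Λ` by which multiplication gives the boundary `∂_r` of the
minimal resolution: `σ` for `r` even (positive), `τ = g - e` for `r` odd. -/
noncomputable def minB (R : Type*) [CommRing R] (k r : ℕ) : GroupRing R k :=
  if Even r then sigma R k else gen R k - 1

/-- The evaluation `u : Λ → R` at the neutral element, `Σ α_i g^i ↦ α_0`. -/
def evalOne {R : Type*} [CommRing R] {k : ℕ} (y : GroupRing R k) : R :=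
  y.coeff (1 : Multiplicative (ZMod k))


lemma gen_pow (R : Type*) [CommRing R] (k : ℕ) (j : ℕ) :
    gen R k ^ j = MonoidAlgebra.single (Multiplicative.ofAdd ((j : ZMod k))) (1 : R) := by
  rw [gen, MonoidAlgebra.of_apply, MonoidAlgebra.single_pow]
  congr 1
  · rw [← ofAdd_nsmul]
    congr 1
    simp [nsmul_eq_mul]
  · simp

lemma sigma_mul_apply_one {R : Type*} [CommRing R] {k : ℕ} (y : GroupRing R k) :
    evalOne (sigma R k * y) = ∑ j ∈ Finset.range k, y.coeff (Multiplicative.ofAdd (-(j : ZMod k))) := by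
  rw [evalOne, sigma, Finset.sum_mul, MonoidAlgebra.coeff_sum, Finset.sum_apply']
  refine Finset.sum_congr rfl fun j _ => ?_
  rw [gen_pow, MonoidAlgebra.coeff_single_mul_apply, one_mul, mul_one]
  congr 1

lemma const_of_gen_fixed {R : Type*} [CommRing R] {k : ℕ} (hk : 2 ≤ k) (y : GroupRing R k)
    (h : (gen R k - 1) * y = 0) (a : Multiplicative (ZMod k)) : y.coeff a = y.coeff 1 := by
  have hg : ∀ b : Multiplicative (ZMod k), y.coeff (Multiplicative.ofAdd (1 : ZMod k) * b) = y.coeff b := by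
    intro b
    have h1 : gen R k * y = y := by
      have h' := h
      rw [sub_mul, one_mul, sub_eq_zero] at h'
      exact h'
    have := congrArg (fun f : GroupRing R k => f.coeff (Multiplicative.ofAdd (1 : ZMod k) * b)) h1
    rw [gen, MonoidAlgebra.of_apply, MonoidAlgebra.coeff_single_mul_apply, one_mul] at this
    rw [← this]
    congr 1
    group
  have hn : ∀ n : ℕ, y.coeff (Multiplicative.ofAdd ((n : ZMod k))) = y.coeff 1 := by
    intro n
    induction n with
    | zero => simp
    | succ m ih =>
      rw [← ih]
      have : (((m + 1 : ℕ) : ZMod k)) = (1 : ZMod k) + (m : ZMod k) := by push_cast; ring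
      rw [this, ofAdd_add]
      exact hg _
  haveI : NeZero k := ⟨by omega⟩
  have : a = Multiplicative.ofAdd (((a.toAdd).val : ZMod k)) := by
    simp [ZMod.natCast_val, ZMod.cast_id]
  rw [this, hn]

lemma step_mem {R : Type*} [CommRing R] {k : ℕ} (hk : 2 ≤ k) (m : ℕ) (y : GroupRing R k)
    (h : minB R k m * y = 0) : evalOne (sigma R k * y) ∈ Ideal.span {(k : R)} := by
  rw [minB] at h
  split_ifs at h with he
  · rw [h]
    simp [evalOne]
  · rw [sigma_mul_apply_one]
    have : ∀ j ∈ Finset.range k, y.coeff (Multiplicative.ofAdd (-(j : ZMod k))) = y.coeff 1 :=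
      fun j _ => const_of_gen_fixed hk y h _
    rw [Finset.sum_congr rfl this, Finset.sum_const, Finset.card_range, nsmul_eq_mul]
    exact Ideal.mem_span_singleton.mpr ⟨y.coeff 1, rfl⟩

/-- generalized `ℤ_k`-Tucker lemma: let `C_•` be a chain complex
of free `Λ`-modules with `Λ`-linear boundaries, `φ_• : C_• → M_•` a `Λ`-linear
chain map to the minimal resolution, and `(x_i)_{0 ≤ i ≤ r}` a generalized
`r`-sphere (`∂x_i = σx_{i-1}` for even `i`, `∂x_i = τx_{i-1}` for odd `i`).
With `α_i = u(σ·φ_i(x_i))`, we have `α_i ≡ α_0 (mod kR)` for all `0 ≤ i ≤ r`. -/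
theorem stmt16 (k : ℕ) (hk : 2 ≤ k) (R : Type*) [CommRing R]
    (C : ℕ → Type*) [∀ i, AddCommGroup (C i)] [∀ i, Module (GroupRing R k) (C i)]
    [∀ i, Module.Free (GroupRing R k) (C i)]
    (d : ∀ i : ℕ, C (i + 1) →ₗ[GroupRing R k] C i)
    (hdd : ∀ (i : ℕ) (c : C (i + 2)), d i (d (i + 1) c) = 0)
    (φ : ∀ i : ℕ, C i →ₗ[GroupRing R k] GroupRing R k)
    (hφ : ∀ (i : ℕ) (c : C (i + 1)), φ i (d i c) = minB R k (i + 1) * φ (i + 1) c)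
    (r : ℕ) (x : ∀ i : ℕ, C i)
    (hx : ∀ i : ℕ, i < r → d i (x (i + 1)) = minB R k (i + 1) • x i) :
    ∀ i : ℕ, i ≤ r →
      evalOne (sigma R k * φ i (x i)) - evalOne (sigma R k * φ 0 (x 0)) ∈
        Ideal.span {(k : R)} := by
  intro i
  induction i with
  | zero => intro _; simp
  | succ n ih =>
    intro h
    have hn := ih (by omega)
    have key : minB R k (n + 1) * (φ (n + 1) (x (n + 1)) - φ n (x n)) = 0 := by
      have h1 := hφ n (x (n + 1))
      rw [hx n (by omega), map_smul, smul_eq_mul] at h1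
      rw [mul_sub, ← h1]
      ring
    have hstep := step_mem hk (n + 1) _ key
    have hsub : evalOne (sigma R k * (φ (n + 1) (x (n + 1)) - φ n (x n)))
        = evalOne (sigma R k * φ (n + 1) (x (n + 1))) - evalOne (sigma R k * φ n (x n)) := by
      rw [mul_sub]
      simp [evalOne, MonoidAlgebra.coeff_sub]
    rw [hsub] at hstep
    have := Ideal.add_mem _ hstep hn
    convert this using 1
    ring
end
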